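/- arXiv:1904.08532 — 5 statements merged into one kernel-verified Lean document; each statement's English description precedes it below -/
import Mathlib

section
/- There is an absolute constant c > 0 such that the following holds. Let q > 2, let 0 < θ < 1, let T be a linear operator with nonzero singular values s_1 ≥ ... ≥ s_r, and set m = (cθ)^{2q/(q−2)}·srank_q(T) (assumed to be a positive integer with m < r). Define the truncated values s̃_i = min{s_i, ‖T‖_{S_2}/√m}. Then ∑_{i=1}^r s̃_i^2 ≥ (1 − θ²)·‖T‖_{S_2}². -/
open scoped BigOperators

/-- there is an absolute constant `c > 0` such that for every `q > 2`,
`θ ∈ (0,1)` and operator with non-increasing positive singular values `s : Fin r → ℝ`,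
if `m = (cθ)^{2q/(q-2)}·srank_q(T)` is a positive integer with `m < r`, then the truncated
values `s̃_i = min(s_i, ‖T‖_{S_2}/√m)` satisfy `∑ s̃_i² ≥ (1-θ²)‖T‖_{S_2}²`. -/
theorem truncated_singular_values_sum :
    ∃ c : ℝ, 0 < c ∧ ∀ (q θ : ℝ), 2 < q → 0 < θ → θ < 1 →
      ∀ (r : ℕ) (s : Fin r → ℝ), Antitone s → (∀ i, 0 < s i) →
      ∀ m : ℕ, 0 < m → m < r →
      (m : ℝ) = (c * θ) ^ (2 * q / (q - 2)) *
        (((∑ i, s i ^ 2) ^ ((1 : ℝ) / 2) / (∑ i, s i ^ q) ^ ((1 : ℝ) / q)) ^ (2 * q / (q - 2))) →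
      (1 - θ ^ 2) * (∑ i, s i ^ 2) ≤
        ∑ i, (min (s i) ((∑ j, s j ^ 2) ^ ((1 : ℝ) / 2) / Real.sqrt m)) ^ 2 := by
  refine ⟨1, one_pos, ?_⟩
  intro q θ hq hθ0 hθ1 r s hanti hpos m hm0 hmr hmeq
  have hq0 : (0:ℝ) < q := by linarith
  have hq2 : (0:ℝ) < q - 2 := by linarith
  haveI : Nonempty (Fin r) := Fin.pos_iff_nonempty.mp (hm0.trans hmr)
  set S2 : ℝ := ∑ i, s i ^ 2 with hS2def
  set Sq : ℝ := ∑ i, s i ^ q with hSqdef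
  have hS2pos : 0 < S2 :=
    Finset.sum_pos (fun i _ => pow_pos (hpos i) 2) Finset.univ_nonempty
  have hSqpos : 0 < Sq :=
    Finset.sum_pos (fun i _ => Real.rpow_pos_of_pos (hpos i) q) Finset.univ_nonempty
  have hmpos : (0:ℝ) < (m:ℝ) := by exact_mod_cast hm0
  set τ : ℝ := S2 ^ ((1:ℝ)/2) / Real.sqrt m with hτdef
  have hhalf : (S2 ^ ((1:ℝ)/2))^2 = S2 := by
    rw [← Real.rpow_natCast (S2 ^ ((1:ℝ)/2)) 2, ← Real.rpow_mul hS2pos.le]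
    norm_num
  have hτpos : 0 < τ := div_pos (Real.rpow_pos_of_pos hS2pos _) (Real.sqrt_pos.mpr hmpos)
  have hτsq : τ^2 = S2 / m := by
    rw [hτdef, div_pow, hhalf, Real.sq_sqrt hmpos.le]
  set A : Finset (Fin r) := Finset.map (Fin.castLEEmb hmr.le) Finset.univ with hAdef
  have hAmem : ∀ i : Fin r, i ∈ A ↔ (i:ℕ) < m := by
    intro i
    simp only [hAdef, Finset.mem_map, Finset.mem_univ, true_and, Fin.coe_castLEEmb]
    constructor
    · rintro ⟨j, rfl⟩; exact j.isLt
    · intro h; exact ⟨⟨i, h⟩, rfl⟩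
  have hAcard : A.card = m := by simp [hAdef]
  set im : Fin r := ⟨m, hmr⟩ with himdef
  have hsum_le : ∀ (f : Fin r → ℝ), (∀ i, 0 ≤ f i) → ∑ i ∈ A, f i ≤ ∑ i, f i :=
    fun f hf => Finset.sum_le_sum_of_subset_of_nonneg (Finset.subset_univ A)
      (fun i _ _ => hf i)
  -- s is small past index m
  have hsm : s im ≤ τ := by
    have h1 : (m:ℝ) * (s im)^2 ≤ S2 := by
      have h2 : ∀ i ∈ A, (s im)^2 ≤ s i ^ 2 := by
        intro i hi
        have hle : i ≤ im := by
          rw [Fin.le_def]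
          exact le_of_lt ((hAmem i).mp hi)
        exact pow_le_pow_left₀ (hpos im).le (hanti hle) 2
      calc (m:ℝ) * (s im)^2 = A.card • (s im)^2 := by
            rw [hAcard]; simp [nsmul_eq_mul]
        _ ≤ ∑ i ∈ A, s i ^ 2 := Finset.card_nsmul_le_sum A _ _ h2
        _ ≤ S2 := hsum_le _ (fun i => sq_nonneg _)
    have h3 : (s im)^2 ≤ τ^2 := by
      rw [hτsq, le_div_iff₀ hmpos]; linarith [h1]
    exact (pow_le_pow_iff_left₀ (hpos im).le hτpos.le two_ne_zero).mp h3
  -- Hölder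
  have hconj : Real.HolderConjugate (q/2) (q/(q-2)) := by
    constructor
    · rw [inv_div, inv_div, inv_one, ← add_div, add_sub_cancel, div_self hq0.ne']
    · positivity
    · exact div_pos hq0 hq2
  have hholder : ∑ i ∈ A, s i ^ 2 ≤ Sq ^ ((2:ℝ)/q) * (m:ℝ) ^ ((q-2)/q) := by
    have h := Real.inner_le_Lp_mul_Lq_of_nonneg (s := A) (f := fun i => s i ^ 2)
      (g := fun _ => (1:ℝ)) hconj (fun i _ => sq_nonneg _) (fun i _ => zero_le_one)
    simp only [mul_one] at h
    have e1 : ∀ i : Fin r, (s i ^ 2 : ℝ) ^ (q/2) = s i ^ q := by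
      intro i
      rw [← Real.rpow_natCast (s i) 2, ← Real.rpow_mul (hpos i).le]
      congr 1
      push_cast
      ring
    have e2 : ∑ i ∈ A, (s i ^ 2 : ℝ) ^ (q/2) = ∑ i ∈ A, s i ^ q := by
      exact Finset.sum_congr rfl (fun i _ => e1 i)
    have e3 : ∑ i ∈ A, ((1:ℝ)) ^ (q/(q-2)) = (m:ℝ) := by
      simp [hAcard]
    rw [e2, e3] at h
    have e4 : (1:ℝ)/(q/2) = 2/q := by field_simp
    have e5 : (1:ℝ)/(q/(q-2)) = (q-2)/q := by field_simp
    rw [e4, e5] at h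
    refine h.trans ?_
    have h6 : ∑ i ∈ A, s i ^ q ≤ Sq := hsum_le _ (fun i => (Real.rpow_pos_of_pos (hpos i) q).le)
    gcongr
    exact Finset.sum_nonneg (fun i _ => (Real.rpow_pos_of_pos (hpos i) q).le)
  -- compute  Sq^{2/q} * m^{(q-2)/q} = θ² S2
  have hkey : Sq ^ ((2:ℝ)/q) * (m:ℝ) ^ ((q-2)/q) = θ^2 * S2 := by
    set X : ℝ := S2 ^ ((1:ℝ)/2) / Sq ^ ((1:ℝ)/q) with hXdef
    have hXpos : 0 < X := div_pos (Real.rpow_pos_of_pos hS2pos _) (Real.rpow_pos_of_pos hSqpos _)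
    have hm' : (m:ℝ) = (θ * X) ^ (2*q/(q-2)) := by
      rw [hmeq, one_mul, ← Real.mul_rpow hθ0.le hXpos.le]
    have hrp : (m:ℝ) ^ ((q-2)/q) = (θ*X)^2 := by
      rw [hm', ← Real.rpow_natCast (θ*X) 2, ← Real.rpow_mul (by positivity : (0:ℝ) ≤ θ*X)]
      congr 1
      push_cast
      field_simp
    rw [hrp]
    have hX2 : X^2 = S2 / Sq ^ ((2:ℝ)/q) := by
      rw [hXdef, div_pow, hhalf]
      congr 1
      rw [← Real.rpow_natCast (Sq ^ ((1:ℝ)/q)) 2, ← Real.rpow_mul hSqpos.le]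
      congr 1
      push_cast
      ring
    rw [mul_pow, hX2]
    have hne : Sq ^ ((2:ℝ)/q) ≠ 0 := (Real.rpow_pos_of_pos hSqpos _).ne'
    field_simp
  -- assembly
  have hloss : S2 - ∑ i, (min (s i) τ)^2 ≤ θ^2 * S2 := by
    have hsub : S2 - ∑ i, (min (s i) τ)^2 = ∑ i, (s i ^ 2 - (min (s i) τ)^2) := by
      rw [Finset.sum_sub_distrib]
    rw [hsub]
    have hzero : ∀ i ∈ Finset.univ, i ∉ A → s i ^ 2 - (min (s i) τ)^2 = 0 := by
      intro i _ hiA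
      have hge : (im:Fin r) ≤ i := by
        rw [Fin.le_def]
        exact le_of_not_gt (fun h => hiA ((hAmem i).mpr h))
      have : s i ≤ τ := le_trans (hanti hge) hsm
      rw [min_eq_left this, sub_self]
    calc ∑ i, (s i ^ 2 - (min (s i) τ)^2)
        = ∑ i ∈ A, (s i ^ 2 - (min (s i) τ)^2) :=
          (Finset.sum_subset (Finset.subset_univ A) hzero).symm
      _ ≤ ∑ i ∈ A, s i ^ 2 := by
          refine Finset.sum_le_sum (fun i _ => ?_)
          have := sq_nonneg (min (s i) τ)
          linarith
      _ ≤ Sq ^ ((2:ℝ)/q) * (m:ℝ) ^ ((q-2)/q) := hholder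
      _ = θ^2 * S2 := hkey
  have hfin : (1 - θ^2) * S2 = S2 - θ^2 * S2 := by ring
  rw [hfin]
  linarith [hloss]
end

section
/- Let X be a random vector in R^n with a density, let S : R^n → R^k (k ≤ n) have rank k, with singular value decomposition S = U D P_k V where U ∈ O(k), V ∈ O(n), D is the diagonal matrix of singular values, and P_k the projection onto the first k coordinates. Set E = V*(R^k). Then for every compact set K ⊂ R^k, P(SX ∈ K) = P(P_E X ∈ V* D^{-1} U* K), and consequently P(SX ∈ K) ≤ vol(K)·‖f_{P_E X}‖_∞ / det(SS*)^{1/2}. -/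
open MeasureTheory Matrix
open scoped BigOperators

/-- The coordinate projection `P_k : ℝ^n → ℝ^k` onto the first `k` coordinates, as a matrix. -/
def coordProj (k n : ℕ) : Matrix (Fin k) (Fin n) ℝ :=
  Matrix.of fun i j => if (i : ℕ) = (j : ℕ) then 1 else 0

lemma coordProj_mul_transpose (k n : ℕ) (hkn : k ≤ n) :
    coordProj k n * (coordProj k n).transpose = 1 := by
  ext i j
  simp only [Matrix.mul_apply, coordProj, Matrix.transpose_apply, Matrix.of_apply,
    Matrix.one_apply]
  rw [Finset.sum_eq_single (⟨(i : ℕ), lt_of_lt_of_le i.2 hkn⟩ : Fin n)]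
  · by_cases h : i = j
    · subst h; simp
    · have h' : (j : ℕ) ≠ (i : ℕ) := fun hc => h (Fin.ext hc.symm)
      simp [h', h]
  · intro b _ hb
    have : (i : ℕ) ≠ (b : ℕ) := by
      intro hc
      apply hb
      exact Fin.ext (by simpa using hc.symm)
    simp [this]
  · simp

/-- let `X` be a random vector in `ℝ^n` with a density and let
`S = U D P_k V : ℝ^n → ℝ^k` (singular value decomposition, `rank S = k`). With
`E = V*(ℝ^k)`, for every compact `K ⊂ ℝ^k`:
`P(SX ∈ K) = P(P_E X ∈ V* D⁻¹ U* K)`, and consequently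
`P(SX ∈ K) ≤ vol(K)·‖f_{P_E X}‖_∞ / det(SS*)^{1/2}` (here the density `g` of `P_E X` is
written in coordinates of `E`, i.e. as the density of `P_k V X`). -/
theorem svd_pushforward_small_ball (n k : ℕ) (hk : 0 < k) (hkn : k ≤ n)
    (Ω : Type) (_ : MeasurableSpace Ω) (μ : Measure Ω) (_ : IsProbabilityMeasure μ)
    (X : Ω → Fin n → ℝ) (hX : Measurable X)
    (S : Matrix (Fin k) (Fin n) ℝ)
    (U : Matrix (Fin k) (Fin k) ℝ) (V : Matrix (Fin n) (Fin n) ℝ)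
    (D : Matrix (Fin k) (Fin k) ℝ)
    (hU : U * U.transpose = 1) (hV : V * V.transpose = 1)
    (hDdiag : ∀ i j, i ≠ j → D i j = 0) (hDpos : ∀ i, 0 < D i i)
    (hS : S = U * D * coordProj k n * V)
    (K : Set (Fin k → ℝ)) (hK : IsCompact K) :
    μ {ω | S.mulVec (X ω) ∈ K} =
      μ {ω | (V.transpose * (coordProj k n).transpose * coordProj k n * V).mulVec (X ω) ∈
          (fun y => (V.transpose * (coordProj k n).transpose * D⁻¹ * U.transpose).mulVec y) '' K}
    ∧ ∀ (g : (Fin k → ℝ) → ℝ) (C : ℝ),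
        (∀ A : Set (Fin k → ℝ), MeasurableSet A →
          μ {ω | (coordProj k n * V).mulVec (X ω) ∈ A} = ∫⁻ x in A, ENNReal.ofReal (g x)) →
        (∀ᵐ x : Fin k → ℝ, g x ≤ C) →
        μ {ω | S.mulVec (X ω) ∈ K} ≤
          ENNReal.ofReal (C / Real.sqrt (S * S.transpose).det) * volume K := by
  set P := coordProj k n with hP
  -- basic matrix facts
  have hUtU : U.transpose * U = 1 := mul_eq_one_comm.mp hU
  have hVtV : V.transpose * V = 1 := mul_eq_one_comm.mp hV
  have hDeq : D = Matrix.diagonal (fun i => D i i) := by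
    ext i j
    by_cases h : i = j
    · subst h; simp
    · simp [Matrix.diagonal, h, hDdiag i j h]
  have hDdetpos : 0 < D.det := by
    rw [hDeq, Matrix.det_diagonal]
    exact Finset.prod_pos fun i _ => by simpa using hDpos i
  have hDunit : IsUnit D.det := isUnit_iff_ne_zero.mpr (ne_of_gt hDdetpos)
  have hDinv : D⁻¹ * D = 1 := Matrix.nonsing_inv_mul D hDunit
  have hDinv' : D * D⁻¹ = 1 := Matrix.mul_nonsing_inv D hDunit
  have hPPt : P * P.transpose = 1 := coordProj_mul_transpose k n hkn
  have hDt : D.transpose = D := by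
    rw [hDeq]; exact Matrix.diagonal_transpose _
  -- S * T = 1 where T = Vᵀ Pᵀ D⁻¹ Uᵀ
  set T := V.transpose * P.transpose * D⁻¹ * U.transpose with hT
  have hST : S * T = 1 := by
    rw [hS, hT]
    calc U * D * P * V * (V.transpose * P.transpose * D⁻¹ * U.transpose)
        = U * D * ((P * (V * V.transpose)) * P.transpose) * D⁻¹ * U.transpose := by
          simp only [Matrix.mul_assoc]
      _ = U * (D * D⁻¹) * U.transpose := by
          rw [hV, Matrix.mul_one, hPPt, Matrix.mul_one]; simp only [Matrix.mul_assoc]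
      _ = 1 := by rw [hDinv', Matrix.mul_one, hU]
  set M := V.transpose * P.transpose * P * V with hM
  have hTS : T * S = M := by
    rw [hS, hT, hM]
    calc V.transpose * P.transpose * D⁻¹ * U.transpose * (U * D * P * V)
        = V.transpose * P.transpose * (D⁻¹ * ((U.transpose * U) * D)) * P * V := by
          simp only [Matrix.mul_assoc]
      _ = V.transpose * P.transpose * P * V := by
          rw [hUtU, Matrix.one_mul, hDinv, Matrix.mul_one]
  have hSM : S * M = S := by
    rw [hS, hM]
    calc U * D * P * V * (V.transpose * P.transpose * P * V)
        = U * D * ((P * (V * V.transpose)) * P.transpose) * P * V := by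
          simp only [Matrix.mul_assoc]
      _ = U * D * P * V := by
          rw [hV, Matrix.mul_one, hPPt, Matrix.mul_one]
  constructor
  · -- set equality
    congr 1
    ext ω
    simp only [Set.mem_setOf_eq]
    constructor
    · intro h
      refine ⟨S.mulVec (X ω), h, ?_⟩
      show T.mulVec (S.mulVec (X ω)) = _
      rw [Matrix.mulVec_mulVec, hTS]
    · rintro ⟨z, hz, hzeq⟩
      have h2 := congrArg (fun v => S.mulVec v) hzeq
      simp only [Matrix.mulVec_mulVec, hST, hSM, Matrix.one_mulVec] at h2
      rwa [← h2]
  · -- the bound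
    intro g C hg hgC
    -- determinant of S Sᵀ
    have hSt : S.transpose = V.transpose * P.transpose * D * U.transpose := by
      rw [hS]
      simp only [Matrix.transpose_mul, hDt, Matrix.mul_assoc]
    have hSSt : S * S.transpose = U * (D * D) * U.transpose := by
      rw [hSt, hS]
      calc U * D * P * V * (V.transpose * P.transpose * D * U.transpose)
          = U * D * ((P * (V * V.transpose)) * P.transpose) * D * U.transpose := by
            simp only [Matrix.mul_assoc]
        _ = U * (D * D) * U.transpose := by
            rw [hV, Matrix.mul_one, hPPt, Matrix.mul_one]; simp only [Matrix.mul_assoc]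
    have hUdet : U.det * U.det = 1 := by
      have := congrArg Matrix.det hU
      rwa [Matrix.det_mul, Matrix.det_transpose, Matrix.det_one] at this
    have hdetSSt : (S * S.transpose).det = D.det ^ 2 := by
      rw [hSSt, Matrix.det_mul, Matrix.det_mul, Matrix.det_mul, Matrix.det_transpose]
      linear_combination D.det ^ 2 * hUdet
    have hsqrt : Real.sqrt (S * S.transpose).det = D.det := by
      rw [hdetSSt, Real.sqrt_sq (le_of_lt hDdetpos)]
    -- the preimage set
    set f : (Fin k → ℝ) →ₗ[ℝ] (Fin k → ℝ) := Matrix.toLin' (U * D) with hf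
    have hfdet : LinearMap.det f = U.det * D.det := by
      rw [hf, LinearMap.det_toLin', Matrix.det_mul]
    have hfdet_ne : LinearMap.det f ≠ 0 := by
      rw [hfdet]
      rcases mul_self_eq_one_iff.mp hUdet with h | h <;>
        simp [h, ne_of_gt hDdetpos]
    set A : Set (Fin k → ℝ) := f ⁻¹' K with hA
    have hAmeas : MeasurableSet A :=
      hK.isClosed.measurableSet.preimage f.continuous_of_finiteDimensional.measurable
    have hsets : {ω | S.mulVec (X ω) ∈ K} = {ω | (P * V).mulVec (X ω) ∈ A} := by
      ext ω
      simp only [Set.mem_setOf_eq, hA, Set.mem_preimage, hf, Matrix.toLin'_apply,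
        Matrix.mulVec_mulVec]
      rw [hS, Matrix.mul_assoc (U * D)]
    have hvolA : volume A = ENNReal.ofReal |(U.det * D.det)⁻¹| * volume K := by
      rw [hA, Measure.addHaar_preimage_linearMap volume hfdet_ne, hfdet]
    have habs : |(U.det * D.det)⁻¹| = D.det⁻¹ := by
      rw [abs_inv, abs_mul]
      rcases mul_self_eq_one_iff.mp hUdet with h | h <;>
        simp [h, abs_of_pos hDdetpos]
    calc μ {ω | S.mulVec (X ω) ∈ K} = ∫⁻ x in A, ENNReal.ofReal (g x) := by
          rw [hsets, hg A hAmeas]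
      _ ≤ ∫⁻ _x in A, ENNReal.ofReal C := by
          refine lintegral_mono_ae ?_
          filter_upwards [ae_restrict_of_ae hgC] with x hx
          exact ENNReal.ofReal_le_ofReal hx
      _ = ENNReal.ofReal C * volume A := setLIntegral_const A _
      _ = ENNReal.ofReal (C / Real.sqrt (S * S.transpose).det) * volume K := by
          rw [hvolA, habs, hsqrt]
          rw [div_eq_mul_inv, mul_comm C, ENNReal.ofReal_mul (by positivity), ← mul_assoc,
            mul_comm (ENNReal.ofReal C)]
end

section
/- Let X be a random vector in R^n such that for every k-dimensional subspace E ⊂ R^n the density of P_E X satisfies ‖f_{P_E X}‖_∞ ≤ L^k. Then for every linear map T : R^n → R^m and every k-dimensional subspace F ⊂ R^m with P_F T of rank k, the density of P_F T X satisfies ‖f_{P_F T X}‖_∞ ≤ L^k / det[(P_F T)(P_F T)*]^{1/2}. -/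
open MeasureTheory Matrix
open scoped BigOperators

lemma aux_posDef {k n : ℕ} (B : Matrix (Fin k) (Fin n) ℝ) (hB : B.rank = k) :
    (B * Bᵀ).PosDef := by
  have hps : (B * Bᵀ).PosSemidef := by
    simpa [conjTranspose_eq_transpose_of_trivial] using posSemidef_self_mul_conjTranspose B
  refine posDef_iff_dotProduct_mulVec.mpr ⟨hps.isHermitian, fun x hx => ?_⟩
  have hrankT : (Bᵀ).rank = k := by rw [Matrix.rank_transpose]; exact hB
  have hker : LinearMap.ker (Bᵀ).mulVecLin = ⊥ := by
    have h1 := LinearMap.finrank_range_add_finrank_ker (Bᵀ).mulVecLin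
    rw [Module.finrank_pi] at h1
    have h2 : Module.finrank ℝ (LinearMap.range (Bᵀ).mulVecLin) = k := hrankT
    have h3 : Fintype.card (Fin k) = k := Fintype.card_fin k
    have : Module.finrank ℝ (LinearMap.ker (Bᵀ).mulVecLin) = 0 := by omega
    exact Submodule.finrank_eq_zero.mp this
  have hinj : Function.Injective (Bᵀ).mulVecLin := LinearMap.ker_eq_bot.mp hker
  have hu : Bᵀ *ᵥ x ≠ 0 := by
    intro h0
    have h1 : (Bᵀ).mulVecLin x = (Bᵀ).mulVecLin 0 := by
      rw [Matrix.mulVecLin_apply, map_zero]; exact h0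
    exact hx (hinj h1)
  have heq : star x ⬝ᵥ (B * Bᵀ) *ᵥ x = star (Bᵀ *ᵥ x) ⬝ᵥ (Bᵀ *ᵥ x) := by
    rw [← mulVec_mulVec, dotProduct_mulVec]
    simp [Matrix.mulVec_transpose, star_trivial]
  rw [heq]
  exact dotProduct_star_self_pos_iff.mpr hu

/-- let `X` be a random vector in `ℝ^n` such that for every `k`-dimensional
subspace `E ⊂ ℝ^n` the density of `P_E X` (written in orthonormal coordinates of `E`, i.e.
the density of `A X` for a matrix `A` with orthonormal rows) is bounded by `L^k`.  Then for
every linear `T : ℝ^n → ℝ^m` and every `k`-dimensional subspace `F ⊂ ℝ^m` with `P_F T` of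
rank `k` (represented in orthonormal coordinates of `F` by a matrix `B` of rank `k`), the
density of `P_F T X` is bounded by `L^k / det[(P_F T)(P_F T)*]^{1/2}`. -/
theorem density_bound_under_linear_image (n m k : ℕ) (hk : 0 < k) (hkn : k ≤ n)
    (Ω : Type) (_ : MeasurableSpace Ω) (μ : Measure Ω) (_ : IsProbabilityMeasure μ)
    (X : Ω → Fin n → ℝ) (hX : Measurable X) (L : ℝ) (hL : 0 < L)
    (hyp : ∀ A : Matrix (Fin k) (Fin n) ℝ, A * A.transpose = 1 →
      ∀ g : (Fin k → ℝ) → ℝ,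
        (∀ s : Set (Fin k → ℝ), MeasurableSet s →
          μ {ω | A.mulVec (X ω) ∈ s} = ∫⁻ x in s, ENNReal.ofReal (g x)) →
        ∀ᵐ x : Fin k → ℝ, g x ≤ L ^ k)
    (B : Matrix (Fin k) (Fin n) ℝ) (hB : B.rank = k) :
    ∀ h : (Fin k → ℝ) → ℝ,
      (∀ s : Set (Fin k → ℝ), MeasurableSet s →
        μ {ω | B.mulVec (X ω) ∈ s} = ∫⁻ x in s, ENNReal.ofReal (h x)) →
      ∀ᵐ x : Fin k → ℝ, h x ≤ L ^ k / Real.sqrt (B * B.transpose).det := by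
  classical
  intro h hh
  have hG : (B * Bᵀ).PosDef := aux_posDef B hB
  set M : Matrix (Fin k) (Fin k) ℝ := open scoped MatrixOrder in CFC.sqrt (B * Bᵀ) with hMdef
  have hMps : M.PosSemidef :=
    open scoped MatrixOrder in Matrix.nonneg_iff_posSemidef.mp (CFC.sqrt_nonneg _)
  have hMM : M * M = B * Bᵀ :=
    open scoped MatrixOrder in CFC.sqrt_mul_sqrt_self _ hG.posSemidef.nonneg
  -- det M ≥ 0
  have hdMnn : 0 ≤ M.det := by
    exact hMps.det_nonneg
  have hdetG : 0 < (B * Bᵀ).det := hG.det_pos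
  have hMMdet : M.det * M.det = (B * Bᵀ).det := by rw [← det_mul, hMM]
  have hdM : 0 < M.det := by
    rcases lt_or_eq_of_le hdMnn with h' | h'
    · exact h'
    · exfalso; rw [← hMMdet, ← h'] at hdetG; simp at hdetG
  have hsqrt : Real.sqrt (B * Bᵀ).det = M.det := by
    rw [← hMMdet, Real.sqrt_mul_self hdMnn]
  have hMunit : IsUnit M.det := (ne_of_gt hdM).isUnit
  have hMinvMul : M⁻¹ * M = 1 := nonsing_inv_mul M hMunit
  have hMMulinv : M * M⁻¹ = 1 := mul_nonsing_inv M hMunit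
  have hMT : Mᵀ = M := by
    have := hMps.isHermitian
    rwa [IsHermitian, conjTranspose_eq_transpose_of_trivial] at this
  set A : Matrix (Fin k) (Fin n) ℝ := M⁻¹ * B with hAdef
  have hAAT : A * Aᵀ = 1 := by
    have hMTi : (M⁻¹)ᵀ = M⁻¹ := by rw [transpose_nonsing_inv, hMT]
    calc A * Aᵀ = M⁻¹ * (B * Bᵀ) * M⁻¹ := by
          rw [hAdef, transpose_mul, hMTi]
          simp [Matrix.mul_assoc]
      _ = M⁻¹ * (M * M) * M⁻¹ := by rw [hMM]
      _ = (M⁻¹ * M) * (M * M⁻¹) := by simp [Matrix.mul_assoc]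
      _ = 1 := by rw [hMinvMul, hMMulinv, one_mul]
  have hBMA : ∀ v : Fin n → ℝ, B *ᵥ v = M *ᵥ (A *ᵥ v) := by
    intro v
    rw [mulVec_mulVec, hAdef, ← Matrix.mul_assoc, hMMulinv, Matrix.one_mul]
  -- measurable equivalence given by M
  have hMinv : Invertible M := M.invertibleOfIsUnitDet hMunit
  let eL : (Fin k → ℝ) ≃ₗ[ℝ] (Fin k → ℝ) := M.toLinearEquiv' hMinv
  let e : (Fin k → ℝ) ≃ᵐ (Fin k → ℝ) :=
    eL.toContinuousLinearEquiv.toHomeomorph.toMeasurableEquiv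
  have he : ∀ x, e x = M *ᵥ x := fun x => rfl
  have hecoe : (⇑e : (Fin k → ℝ) → (Fin k → ℝ)) = ⇑(Matrix.toLin' M) := by
    funext x; rw [he x, Matrix.toLin'_apply]
  have hmap : Measure.map (⇑e) volume
      = ENNReal.ofReal |(M.det)⁻¹| • (volume : Measure (Fin k → ℝ)) := by
    rw [hecoe]
    exact Real.map_matrix_volume_pi_eq_smul_volume_pi (ne_of_gt hdM)
  set c1 : ENNReal := ENNReal.ofReal M.det with hc1
  set c2 : ENNReal := ENNReal.ofReal |(M.det)⁻¹| with hc2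
  have hc1c2 : c1 * c2 = 1 := by
    rw [hc1, hc2, abs_of_pos (inv_pos.mpr hdM), ← ENNReal.ofReal_mul hdM.le,
      mul_inv_cancel₀ (ne_of_gt hdM), ENNReal.ofReal_one]
  have hvol : (volume : Measure (Fin k → ℝ)) = c1 • Measure.map (⇑e) volume := by
    rw [hmap, smul_smul, hc1c2, one_smul]
  -- the density of A X
  set g : (Fin k → ℝ) → ℝ := fun x => M.det * h (M *ᵥ x) with hgdef
  have hg : ∀ s : Set (Fin k → ℝ), MeasurableSet s →
      μ {ω | A.mulVec (X ω) ∈ s} = ∫⁻ x in s, ENNReal.ofReal (g x) := by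
    intro s hs
    have hset : {ω | A.mulVec (X ω) ∈ s} = {ω | B.mulVec (X ω) ∈ e '' s} := by
      ext ω
      simp only [Set.mem_setOf_eq, hBMA, ← he]
      exact (e.injective.mem_set_image).symm
    have hmeas : MeasurableSet (e '' s) := e.measurableSet_image.mpr hs
    rw [hset, hh _ hmeas]
    -- change of variables
    calc ∫⁻ x in e '' s, ENNReal.ofReal (h x)
        = ∫⁻ x, (e '' s).indicator (fun y => ENNReal.ofReal (h y)) x := by
          rw [lintegral_indicator hmeas]
      _ = c1 * ∫⁻ x, (e '' s).indicator (fun y => ENNReal.ofReal (h y)) x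
            ∂(Measure.map (⇑e) volume) := by
          conv_lhs => rw [hvol]
          rw [lintegral_smul_measure, smul_eq_mul]
      _ = c1 * ∫⁻ x, (e '' s).indicator (fun y => ENNReal.ofReal (h y)) (e x) := by
          rw [MeasureTheory.lintegral_map_equiv]
      _ = c1 * ∫⁻ x, s.indicator (fun x => ENNReal.ofReal (h (e x))) x := by
          congr 1
          apply lintegral_congr
          intro x
          by_cases hx : x ∈ s
          · rw [Set.indicator_of_mem hx, Set.indicator_of_mem (Set.mem_image_of_mem _ hx)]
          · rw [Set.indicator_of_notMem hx,
              Set.indicator_of_notMem (fun hc => hx (e.injective.mem_set_image.mp hc))]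
      _ = ∫⁻ x, s.indicator (fun x => c1 * ENNReal.ofReal (h (e x))) x := by
          rw [← lintegral_const_mul' _ _ ENNReal.ofReal_ne_top]
          apply lintegral_congr
          intro x
          by_cases hx : x ∈ s
          · rw [Set.indicator_of_mem hx, Set.indicator_of_mem hx]
          · rw [Set.indicator_of_notMem hx, Set.indicator_of_notMem hx, mul_zero]
      _ = ∫⁻ x in s, ENNReal.ofReal (g x) := by
          rw [lintegral_indicator hs]
          apply setLIntegral_congr_fun hs
          intro x _
          beta_reduce
          rw [← ENNReal.ofReal_mul hdM.le, he]
  have hae : ∀ᵐ x : Fin k → ℝ, g x ≤ L ^ k := hyp A hAAT g hg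
  -- transfer along e
  have hae2 : ∀ᵐ y : Fin k → ℝ ∂(Measure.map (⇑e) volume), M.det * h y ≤ L ^ k := by
    rw [← MeasurableEquiv.map_ae]
    rw [Filter.eventually_map]
    filter_upwards [hae] with x hx
    rw [he x]
    exact hx
  rw [hmap] at hae2
  have hc2ne : c2 ≠ 0 := by
    rw [hc2]
    simp [ENNReal.ofReal_eq_zero, abs_of_pos (inv_pos.mpr hdM), inv_pos.mpr hdM,
      not_le.mpr (inv_pos.mpr hdM)]
  have hae3 : ∀ᵐ y : Fin k → ℝ, M.det * h y ≤ L ^ k :=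
    (Measure.ae_ennreal_smul_measure_iff hc2ne).mp hae2
  filter_upwards [hae3] with y hy
  rw [hsqrt]
  exact (le_div_iff₀' hdM).mpr hy
end

section
/- Let X be a random vector in R^n satisfying the weak small-ball assumption with constants θ and L, and let T : R^n → R^m be linear. Let σ ⊂ {1,...,m} be such that the restriction P_σ T (projection onto coordinates in σ) has all its |σ| nonzero singular values at least γ^{−1} for some γ ≥ 1. Then for every τ ⊂ σ, P(‖P_τ T X‖_2 ≤ θ√|τ|) ≤ (c·γ·θ·L)^{|τ|}, where c is an absolute constant. -/
open MeasureTheory Matrix Metric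
open scoped ENNReal
open scoped BigOperators

/-- Euclidean norm of a finitely-indexed real vector. -/
noncomputable def euclNorm {ι : Type*} [Fintype ι] (v : ι → ℝ) : ℝ :=
  Real.sqrt (∑ i, v i ^ 2)

/-- The weak small-ball assumption (wSBA) with constants `θ` and `L`. -/
def SatisfiesWSBA {Ω : Type*} [MeasurableSpace Ω] (μ : Measure Ω) (n : ℕ)
    (X : Ω → Fin n → ℝ) (θ L : ℝ) : Prop :=
  ∀ k : ℕ, 1 ≤ k → k ≤ n - 1 →
    ∀ A : Matrix (Fin k) (Fin n) ℝ, A * A.transpose = 1 →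
      ∀ z : Fin k → ℝ,
        μ {ω | euclNorm (A.mulVec (X ω) - z) ≤ θ * Real.sqrt k} ≤
          ENNReal.ofReal ((L * θ) ^ k)

lemma euclNorm_nonneg {ι : Type*} [Fintype ι] (v : ι → ℝ) : 0 ≤ euclNorm v :=
  Real.sqrt_nonneg _

lemma sumsq_eq_dot {k : ℕ} (v : Fin k → ℝ) : (∑ i, v i ^ 2) = v ⬝ᵥ v := by
  simp [dotProduct, sq]

lemma euclNorm_eq_norm {k : ℕ} (v : Fin k → ℝ) :
    euclNorm v = ‖(WithLp.equiv 2 (Fin k → ℝ)).symm v‖ := by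
  rw [EuclideanSpace.norm_eq]
  simp [euclNorm, sq_abs]

lemma exists_net (k : ℕ) {R r : ℝ} (hr : 0 < r) (hRr : r ≤ R) :
    ∃ s : Finset (EuclideanSpace ℝ (Fin k)),
      (s.card : ℝ) ≤ ((2*R + r)/r) ^ k ∧
      ∀ x : EuclideanSpace ℝ (Fin k), ‖x‖ ≤ R → ∃ z ∈ s, ‖x - z‖ ≤ r := by
  classical
  set E := EuclideanSpace ℝ (Fin k) with hE
  have hR : 0 < R := lt_of_lt_of_le hr hRr
  set P : ℕ → Prop := fun N => ∃ s : Finset E, s.card = N ∧ (∀ z ∈ s, ‖z‖ ≤ R) ∧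
    ∀ z ∈ s, ∀ w ∈ s, z ≠ w → r < dist z w with hP
  have key : ∀ N, P N → (N : ℝ) ≤ ((2*R + r)/r) ^ k := by
    rintro N ⟨s, hcard, hball, hsep⟩
    have hdisj : (s : Set E).PairwiseDisjoint (fun z => ball z (r/2)) := by
      intro z hz w hw hzw
      exact ball_disjoint_ball (by
        have := hsep z hz w hw hzw
        linarith)
    have hsum : ∑ z ∈ s, volume (ball z (r/2)) = volume (⋃ z ∈ s, ball z (r/2)) :=
      (measure_biUnion_finset hdisj (fun z _ => measurableSet_ball)).symm
    have hsub : (⋃ z ∈ s, ball z (r/2)) ⊆ closedBall (0 : E) (R + r/2) := by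
      intro x hx
      simp only [Set.mem_iUnion] at hx
      obtain ⟨z, hz, hxz⟩ := hx
      rw [mem_closedBall]
      have h1 : dist x z ≤ r/2 := le_of_lt (mem_ball.mp hxz)
      have h2 : dist z (0:E) ≤ R := by simpa [dist_eq_norm] using hball z hz
      calc dist x (0:E) ≤ dist x z + dist z 0 := dist_triangle _ _ _
        _ ≤ r/2 + R := by linarith
        _ = R + r/2 := by ring
    have hb : ∀ z : E, volume (ball z (r/2)) =
        ENNReal.ofReal ((r/2)^k) * volume (ball (0:E) 1) := fun z => by
      rw [Measure.addHaar_ball_of_pos _ _ (by positivity : (0:ℝ) < r/2),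
        finrank_euclideanSpace_fin]
    have hc : volume (closedBall (0:E) (R + r/2)) =
        ENNReal.ofReal ((R + r/2)^k) * volume (ball (0:E) 1) := by
      rw [Measure.addHaar_closedBall _ _ (by positivity : (0:ℝ) ≤ R + r/2),
        finrank_euclideanSpace_fin]
    have hpos : volume (ball (0:E) 1) ≠ 0 := (measure_ball_pos _ _ one_pos).ne'
    have hfin : volume (ball (0:E) 1) ≠ ⊤ := measure_ball_lt_top.ne
    have hmain : (N : ℝ≥0∞) * (ENNReal.ofReal ((r/2)^k) * volume (ball (0:E) 1)) ≤
        ENNReal.ofReal ((R + r/2)^k) * volume (ball (0:E) 1) := by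
      calc (N : ℝ≥0∞) * (ENNReal.ofReal ((r/2)^k) * volume (ball (0:E) 1))
          = ∑ z ∈ s, volume (ball z (r/2)) := by
            simp [hb, Finset.sum_const, hcard, mul_comm]
        _ = volume (⋃ z ∈ s, ball z (r/2)) := hsum
        _ ≤ volume (closedBall (0:E) (R + r/2)) := measure_mono hsub
        _ = _ := hc
    rw [← mul_assoc, ENNReal.mul_le_mul_iff_left hpos hfin] at hmain
    have hmain' : ENNReal.ofReal ((N:ℝ) * (r/2)^k) ≤ ENNReal.ofReal ((R + r/2)^k) := by
      rwa [ENNReal.ofReal_mul (by positivity), ENNReal.ofReal_natCast]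
    have hreal : (N:ℝ) * (r/2)^k ≤ (R + r/2)^k :=
      (ENNReal.ofReal_le_ofReal_iff (by positivity)).mp hmain'
    have h2 : (N:ℝ) ≤ (R + r/2)^k / (r/2)^k := by
      rw [le_div_iff₀ (by positivity)]; exact hreal
    calc (N:ℝ) ≤ (R + r/2)^k / (r/2)^k := h2
      _ = ((R + r/2)/(r/2))^k := (div_pow _ _ _).symm
      _ = ((2*R + r)/r)^k := by
          congr 1
          field_simp
  set N₀ := ⌈((2*R + r)/r) ^ k⌉₊ with hN₀
  have hP0 : P 0 := ⟨∅, by simp, by simp, by simp⟩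
  have hPM : P (Nat.findGreatest P N₀) := Nat.findGreatest_spec (Nat.zero_le _) hP0
  obtain ⟨s, hcard, hball, hsep⟩ := hPM
  refine ⟨s, ?_, ?_⟩
  · rw [hcard]; exact key _ ⟨s, hcard, hball, hsep⟩
  · intro x hx
    by_contra hcon
    push_neg at hcon
    have hsep' : ∀ z ∈ s, r < dist x z := by
      intro z hz
      rw [dist_eq_norm]
      exact hcon z hz
    have hxs : x ∉ s := by
      intro hxin
      have := hsep' x hxin
      simp at this
      linarith
    have hP1 : P (s.card + 1) := by
      refine ⟨insert x s, Finset.card_insert_of_notMem hxs, ?_, ?_⟩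
      · intro z hz
        rcases Finset.mem_insert.mp hz with h | h
        · subst h; exact hx
        · exact hball z h
      · intro z hz w hw hzw
        rcases Finset.mem_insert.mp hz with h | h <;>
          rcases Finset.mem_insert.mp hw with h' | h'
        · exact absurd (h.trans h'.symm) hzw
        · subst h; exact hsep' w h'
        · subst h'; rw [dist_comm]; exact hsep' z h
        · exact hsep z h w h' hzw
    have hle : s.card + 1 ≤ N₀ := by
      have := key _ hP1
      have h1 : ((s.card + 1 : ℕ):ℝ) ≤ (N₀:ℝ) := this.trans (Nat.le_ceil _)
      exact_mod_cast h1
    have := Nat.le_findGreatest hle hP1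
    omega

lemma exists_net' (k : ℕ) {R r : ℝ} (hr : 0 < r) (hRr : r ≤ R) :
    ∃ s : Finset (Fin k → ℝ), (s.card : ℝ) ≤ ((2*R + r)/r) ^ k ∧
      ∀ x : Fin k → ℝ, euclNorm x ≤ R → ∃ z ∈ s, euclNorm (x - z) ≤ r := by
  classical
  obtain ⟨s, hcard, hnet⟩ := exists_net k hr hRr
  refine ⟨s.image (WithLp.equiv 2 (Fin k → ℝ)), ?_, ?_⟩
  · exact le_trans (Nat.cast_le.mpr Finset.card_image_le) hcard
  · intro x hx
    obtain ⟨z, hz, hzx⟩ := hnet ((WithLp.equiv 2 (Fin k → ℝ)).symm x)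
      (by rw [← euclNorm_eq_norm]; exact hx)
    refine ⟨WithLp.equiv 2 (Fin k → ℝ) z, Finset.mem_image_of_mem _ hz, ?_⟩
    rw [euclNorm_eq_norm]
    exact hzx

/-- there is an absolute constant `c` with the following property.  Suppose
`X` satisfies the wSBA with constants `θ`, `L`, and `T : ℝ^n → ℝ^m` and `σ ⊂ {1,...,m}` are
such that all the `|σ|` nonzero singular values of `P_σ T` are at least `γ⁻¹` (equivalently,
`‖(P_σ T)* y‖ ≥ γ⁻¹‖y‖` for every `y` supported on `σ`), with `γ ≥ 1`.  Then for every
`τ ⊂ σ`, `P(‖P_τ T X‖ ≤ θ√|τ|) ≤ (c·γ·θ·L)^{|τ|}`. -/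
theorem coordinate_small_ball_block :
    ∃ c : ℝ, 0 < c ∧
      ∀ (n m : ℕ) (Ω : Type) (_ : MeasurableSpace Ω) (μ : Measure Ω)
        (_ : IsProbabilityMeasure μ)
        (X : Ω → Fin n → ℝ) (_ : Measurable X) (θ L : ℝ), 0 < θ → 0 < L → L * θ < 1 →
        SatisfiesWSBA μ n X θ L →
        ∀ (T : Matrix (Fin m) (Fin n) ℝ) (γ : ℝ), 1 ≤ γ →
        ∀ σ τ : Finset (Fin m), τ ⊆ σ → τ.Nonempty → τ.card ≤ n - 1 →
        (∀ y : Fin m → ℝ, (∀ i, i ∉ σ → y i = 0) →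
          γ⁻¹ * euclNorm y ≤ euclNorm (T.transpose.mulVec y)) →
        μ {ω | Real.sqrt (∑ i ∈ τ, T.mulVec (X ω) i ^ 2) ≤ θ * Real.sqrt τ.card} ≤
          ENNReal.ofReal ((c * γ * θ * L) ^ τ.card) := by
  classical
  refine ⟨3, by norm_num, ?_⟩
  intro n m Ω _ μ _ X _ θ L hθ hL hLθ hwsba T γ hγ σ τ hτσ hτne hτn hσ
  set k := τ.card with hk
  have hk1 : 1 ≤ k := Finset.card_pos.mpr hτne
  have hγ0 : (0:ℝ) < γ := lt_of_lt_of_le one_pos hγ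
  set e : {x // x ∈ τ} ≃ Fin k := τ.equivFin with he
  set B : Matrix (Fin k) (Fin n) ℝ := Matrix.of (fun j i => T (e.symm j) i) with hB
  -- (1) sums over τ vs sums over Fin k
  have hBmv : ∀ (x : Fin n → ℝ) (j : Fin k), B.mulVec x j = T.mulVec x (e.symm j) := by
    intro x j; rfl
  have hBsum : ∀ x : Fin n → ℝ, (∑ j, B.mulVec x j ^ 2) = ∑ i ∈ τ, T.mulVec x i ^ 2 := by
    intro x
    calc (∑ j, B.mulVec x j ^ 2) = ∑ j : Fin k, T.mulVec x (e.symm j) ^ 2 := by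
          simp [hBmv]
      _ = ∑ i : {x // x ∈ τ}, T.mulVec x (i : Fin m) ^ 2 :=
          Equiv.sum_comp e.symm (fun i : {x // x ∈ τ} => T.mulVec x (i : Fin m) ^ 2)
      _ = ∑ i ∈ τ, T.mulVec x i ^ 2 := Finset.sum_coe_sort τ (fun i => T.mulVec x i ^ 2)
  -- (2): lower bound for Bᵀ
  have hBlow : ∀ u : Fin k → ℝ, γ⁻¹ * euclNorm u ≤ euclNorm (Bᵀ.mulVec u) := by
    intro u
    set y : Fin m → ℝ := fun i => if h : i ∈ τ then u (e ⟨i, h⟩) else 0 with hy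
    have hysupp : ∀ i, i ∉ σ → y i = 0 := by
      intro i hi
      have : i ∉ τ := fun h => hi (hτσ h)
      simp [hy, this]
    have hynorm : euclNorm y = euclNorm u := by
      unfold euclNorm
      congr 1
      calc (∑ i, y i ^ 2) = ∑ i ∈ τ, y i ^ 2 := by
            apply (Finset.sum_subset τ.subset_univ _).symm
            intro i _ hi
            simp [hy, hi]
        _ = ∑ i : {x // x ∈ τ}, y (i : Fin m) ^ 2 := (Finset.sum_coe_sort τ (fun i => y i ^ 2)).symm
        _ = ∑ i : {x // x ∈ τ}, u (e i) ^ 2 := by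
            apply Finset.sum_congr rfl
            intro i _
            simp [hy, i.2]
        _ = ∑ j, u j ^ 2 := Equiv.sum_comp e (fun j => u j ^ 2)
    have hyT : Tᵀ.mulVec y = Bᵀ.mulVec u := by
      funext i
      show (∑ p, Tᵀ i p * y p) = ∑ j, Bᵀ i j * u j
      calc (∑ p, Tᵀ i p * y p) = ∑ p ∈ τ, Tᵀ i p * y p := by
            apply (Finset.sum_subset τ.subset_univ _).symm
            intro p _ hp
            simp [hy, hp]
        _ = ∑ p : {x // x ∈ τ}, Tᵀ i (p : Fin m) * y (p : Fin m) :=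
            (Finset.sum_coe_sort τ (fun p => Tᵀ i p * y p)).symm
        _ = ∑ p : {x // x ∈ τ}, Tᵀ i (p : Fin m) * u (e p) := by
            apply Finset.sum_congr rfl
            intro p _
            simp [hy, p.2]
        _ = ∑ j, Tᵀ i ((e.symm j : {x // x ∈ τ}) : Fin m) * u (e (e.symm j)) :=
            (Equiv.sum_comp e.symm (fun p : {x // x ∈ τ} =>
              Tᵀ i (p : Fin m) * u (e p))).symm
        _ = ∑ j, Bᵀ i j * u j := by
            apply Finset.sum_congr rfl
            intro j _
            simp [hB, Matrix.transpose_apply]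
    have := hσ y hysupp
    rwa [hynorm, hyT] at this
  -- positivity of euclNorm
  have heucl_pos : ∀ {l : ℕ} (v : Fin l → ℝ), v ≠ 0 → 0 < euclNorm v := by
    intro l v hv
    apply Real.sqrt_pos.mpr
    have : ∃ i, v i ≠ 0 := by
      by_contra hc
      push_neg at hc
      exact hv (funext hc)
    obtain ⟨i, hi⟩ := this
    have h1 : 0 < v i ^ 2 := by positivity
    have : ∀ j, 0 ≤ v j ^ 2 := fun j => sq_nonneg _
    exact Finset.sum_pos' (fun j _ => this j) ⟨i, Finset.mem_univ i, h1⟩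
  -- (3) G = B * Bᵀ is positive definite
  set G := B * Bᵀ with hG
  have hdotG : ∀ u : Fin k → ℝ, u ⬝ᵥ G.mulVec u = (∑ i, Bᵀ.mulVec u i ^ 2) := by
    intro u
    rw [sumsq_eq_dot]
    calc u ⬝ᵥ G.mulVec u = u ⬝ᵥ (B.mulVec (Bᵀ.mulVec u)) := by
          rw [← Matrix.mulVec_mulVec]
      _ = (Bᵀ.mulVec u) ⬝ᵥ (Bᵀ.mulVec u) := by
          rw [Matrix.dotProduct_mulVec, ← Matrix.mulVec_transpose, dotProduct_comm]
  have hGpd : G.PosDef := by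
    refine Matrix.PosDef.of_dotProduct_mulVec_pos ?_ ?_
    · show Gᵀ = G
      rw [hG, Matrix.transpose_mul, Matrix.transpose_transpose]
    · intro x hx
      rw [star_trivial, hdotG]
      have h1 : 0 < euclNorm (Bᵀ.mulVec x) := by
        have h2 := hBlow x
        have h3 : 0 < euclNorm x := heucl_pos x hx
        have : 0 < γ⁻¹ * euclNorm x := by positivity
        linarith
      have := Real.sqrt_pos.mp h1
      simpa [euclNorm] using this
  open scoped MatrixOrder in set S := CFC.sqrt G with hS
  have hSS : S * S = G := by
    open scoped MatrixOrder in exact CFC.sqrt_mul_sqrt_self G hGpd.posSemidef.nonneg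
  have hSsymm : Sᵀ = S := by
    open scoped MatrixOrder in exact (CFC.sqrt_nonneg G).posSemidef.1
  have hSdet : IsUnit S.det := by
    have hGdet : 0 < G.det := hGpd.det_pos
    have : S.det * S.det = G.det := by rw [← Matrix.det_mul, hSS]
    have hne : S.det ≠ 0 := by
      intro h
      rw [h, mul_zero] at this
      exact hGdet.ne this
    exact isUnit_iff_ne_zero.mpr hne
  set A := S⁻¹ * B with hA
  have hSS' : S * S = B * Bᵀ := by rw [hSS, hG]
  have hAAT : A * Aᵀ = 1 := by
    have hinvT : S⁻¹ᵀ = S⁻¹ := by rw [Matrix.transpose_nonsing_inv, hSsymm]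
    calc A * Aᵀ = (S⁻¹ * B) * (Bᵀ * S⁻¹) := by rw [hA, Matrix.transpose_mul, hinvT]
      _ = S⁻¹ * ((B * Bᵀ) * S⁻¹) := by
          rw [Matrix.mul_assoc, Matrix.mul_assoc]
      _ = S⁻¹ * ((S * S) * S⁻¹) := by rw [hSS']
      _ = S⁻¹ * (S * (S * S⁻¹)) := by rw [Matrix.mul_assoc]
      _ = S⁻¹ * S := by rw [Matrix.mul_nonsing_inv _ hSdet, Matrix.mul_one]
      _ = 1 := Matrix.nonsing_inv_mul _ hSdet
  -- (4) euclNorm (S *ᵥ u) = euclNorm (Bᵀ *ᵥ u)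
  have hSnorm : ∀ u : Fin k → ℝ, euclNorm (S.mulVec u) = euclNorm (Bᵀ.mulVec u) := by
    intro u
    unfold euclNorm
    congr 1
    rw [sumsq_eq_dot]
    calc S.mulVec u ⬝ᵥ S.mulVec u
        = (S.mulVec (S.mulVec u)) ⬝ᵥ u := by
          rw [Matrix.dotProduct_mulVec, ← Matrix.mulVec_transpose, hSsymm]
      _ = ((S * S).mulVec u) ⬝ᵥ u := by rw [Matrix.mulVec_mulVec]
      _ = u ⬝ᵥ G.mulVec u := by rw [hSS, dotProduct_comm]
      _ = ∑ i, Bᵀ.mulVec u i ^ 2 := hdotG u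
  -- (5) euclNorm (A *ᵥ x) ≤ γ * euclNorm (B *ᵥ x)
  have hAB : ∀ x : Fin n → ℝ, euclNorm (A.mulVec x) ≤ γ * euclNorm (B.mulVec x) := by
    intro x
    set v := B.mulVec x with hv
    have hAx : A.mulVec x = S⁻¹.mulVec v := by rw [hA, ← Matrix.mulVec_mulVec]
    set u := S⁻¹.mulVec v with hu
    have hSu : S.mulVec u = v := by
      rw [hu, Matrix.mulVec_mulVec, Matrix.mul_nonsing_inv _ hSdet, Matrix.one_mulVec]
    have h1 : γ⁻¹ * euclNorm u ≤ euclNorm v := by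
      have := hBlow u
      rw [← hSnorm, hSu] at this
      exact this
    rw [hAx]
    calc euclNorm u = γ * (γ⁻¹ * euclNorm u) := by
          field_simp
      _ ≤ γ * euclNorm v := by
          apply mul_le_mul_of_nonneg_left h1 (le_of_lt hγ0)
  -- net
  have hkpos : (0:ℝ) < Real.sqrt k := Real.sqrt_pos.mpr (Nat.cast_pos.mpr hk1)
  have hrpos : (0:ℝ) < θ * Real.sqrt k := mul_pos hθ hkpos
  have hRr : θ * Real.sqrt k ≤ γ * (θ * Real.sqrt k) :=
    le_mul_of_one_le_left (le_of_lt hrpos) hγ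
  obtain ⟨net, hnetcard, hnet⟩ := exists_net' k hrpos hRr
  have hratio : ((2*(γ * (θ * Real.sqrt k)) + θ * Real.sqrt k)/(θ * Real.sqrt k)) = 2*γ + 1 := by
    rw [div_eq_iff (ne_of_gt hrpos)]
    ring
  rw [hratio] at hnetcard
  -- event inclusion
  have hincl : {ω | Real.sqrt (∑ i ∈ τ, T.mulVec (X ω) i ^ 2) ≤ θ * Real.sqrt k} ⊆
      ⋃ z ∈ net, {ω | euclNorm (A.mulVec (X ω) - z) ≤ θ * Real.sqrt k} := by
    intro ω hω
    have hB1 : euclNorm (B.mulVec (X ω)) ≤ θ * Real.sqrt k := by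
      unfold euclNorm
      rw [hBsum]
      exact hω
    have hA1 : euclNorm (A.mulVec (X ω)) ≤ γ * (θ * Real.sqrt k) :=
      le_trans (hAB (X ω)) (mul_le_mul_of_nonneg_left hB1 (le_of_lt hγ0))
    obtain ⟨z, hz, hz2⟩ := hnet (A.mulVec (X ω)) hA1
    exact Set.mem_biUnion hz hz2
  calc μ {ω | Real.sqrt (∑ i ∈ τ, T.mulVec (X ω) i ^ 2) ≤ θ * Real.sqrt k}
      ≤ μ (⋃ z ∈ net, {ω | euclNorm (A.mulVec (X ω) - z) ≤ θ * Real.sqrt k}) :=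
        measure_mono hincl
    _ ≤ ∑ z ∈ net, μ {ω | euclNorm (A.mulVec (X ω) - z) ≤ θ * Real.sqrt k} :=
        measure_biUnion_finset_le _ _
    _ ≤ ∑ _z ∈ net, ENNReal.ofReal ((L * θ) ^ k) := by
        apply Finset.sum_le_sum
        intro z _
        exact hwsba k hk1 hτn A hAAT z
    _ = (net.card : ℝ≥0∞) * ENNReal.ofReal ((L * θ) ^ k) := by
        rw [Finset.sum_const, nsmul_eq_mul]
    _ ≤ ENNReal.ofReal ((2*γ+1) ^ k) * ENNReal.ofReal ((L * θ) ^ k) := by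
        apply mul_le_mul_left
        rw [← ENNReal.ofReal_natCast]
        exact ENNReal.ofReal_le_ofReal hnetcard
    _ ≤ ENNReal.ofReal ((3 * γ * θ * L) ^ k) := by
        rw [← ENNReal.ofReal_mul (by positivity)]
        apply ENNReal.ofReal_le_ofReal
        have h1 : (2*γ+1) ≤ 3*γ := by
          calc 2*γ+1 ≤ 2*γ+γ := add_le_add_right hγ _
            _ = 3*γ := by ring
        calc (2*γ+1) ^ k * (L * θ) ^ k = ((2*γ+1) * (L * θ)) ^ k := (mul_pow _ _ _).symm
          _ ≤ ((3*γ) * (L*θ)) ^ k := by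
              apply pow_le_pow_left₀ (by positivity)
              apply mul_le_mul_of_nonneg_right h1 (by positivity)
          _ = (3 * γ * θ * L) ^ k := by ring
end

section
/- Let X be a random vector in R^n whose coordinates x_1,...,x_n satisfy: for every subset τ ⊂ {1,...,n} and every ε ∈ (0,1), P(|{i ∈ τ : |x_i| ≥ ε}| ≤ |τ|/2) ≤ (c_3 L ε)^{c_4 |τ|} for absolute constants c_3, c_4 and a constant L ≥ 1. Then there exist absolute constants c_1, c_2 such that for every a ∈ R^n and every ε ∈ (0,1), with k = (c_1·‖a‖_p/‖a‖_∞)^p, one has P(‖(a_i x_i)_{i=1}^n‖_p ≤ ε·‖a‖_p) ≤ (c_2·ε·L)^k. -/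
open MeasureTheory
open scoped BigOperators


private lemma geom_tail_le' {r : ℝ} (hr0 : 0 ≤ r) (hr : r ≤ 1/2) :
    ∀ B : ℕ, ∑ j ∈ Finset.range B, r ^ j ≤ 2 - 2 * r ^ B := by
  intro B
  induction B with
  | zero => simp
  | succ B ih =>
    rw [Finset.sum_range_succ, pow_succ]
    nlinarith [pow_nonneg hr0 B, ih, hr, hr0]

private lemma finset_geom_le' {r : ℝ} (hr0 : 0 ≤ r) (hr : r ≤ 1/2) (F : Finset ℕ) :
    ∑ j ∈ F, r ^ j ≤ 2 := by
  calc ∑ j ∈ F, r ^ j ≤ ∑ j ∈ Finset.range (F.sup id + 1), r ^ j := by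
        apply Finset.sum_le_sum_of_subset_of_nonneg
        · intro j hj
          exact Finset.mem_range.2 (Nat.lt_succ_of_le (Finset.le_sup (f := id) hj))
        · intro j _ _; exact pow_nonneg hr0 j
    _ ≤ 2 - 2 * r ^ (F.sup id + 1) := geom_tail_le' hr0 hr _
    _ ≤ 2 := by nlinarith [pow_nonneg hr0 (F.sup id + 1)]

private lemma finset_geom_min_le' {r : ℝ} (hr0 : 0 ≤ r) (hr : r ≤ 1/2) (F : Finset ℕ)
    (hF : F.Nonempty) : ∑ j ∈ F, r ^ j ≤ 2 * r ^ (F.min' hF) := by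
  set m := F.min' hF with hm
  have h1 : ∀ j ∈ F, r ^ j = r ^ m * r ^ (j - m) := by
    intro j hj
    rw [← pow_add, Nat.add_sub_cancel' (F.min'_le j hj)]
  rw [Finset.sum_congr rfl h1, ← Finset.mul_sum]
  have h2 : ∑ j ∈ F, r ^ (j - m) = ∑ t ∈ F.image (· - m), r ^ t := by
    rw [Finset.sum_image ?inj]
    case inj =>
      intro x hx y hy hxy
      have hx' := F.min'_le x hx
      have hy' := F.min'_le y hy
      simp only at hxy
      omega
  rw [mul_comm (2:ℝ) (r ^ m)]
  refine mul_le_mul_of_nonneg_left ?_ (pow_nonneg hr0 m)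
  rw [h2]
  exact finset_geom_le' hr0 hr _

set_option maxHeartbeats 4000000 in
/-- let `X = (x_1,...,x_n)` be a random vector whose coordinates satisfy the
coordinate small-ball property: for every `τ ⊂ {1,...,n}` and `ε ∈ (0,1)`,
`P(|{i ∈ τ : |x_i| ≥ ε}| ≤ |τ|/2) ≤ (c₃Lε)^{c₄|τ|}`.  Then there are constants `c₁, c₂ > 0`
such that for every `a ≠ 0` and `ε ∈ (0,1)`, with `k = (c₁‖a‖_p/‖a‖_∞)^p`,
`P(‖(a_i x_i)_i‖_p ≤ ε‖a‖_p) ≤ (c₂εL)^k`. -/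
theorem lp_small_ball_from_coordinate_small_ball (c₃ c₄ : ℝ) (hc₃ : 0 < c₃) (hc₄ : 0 < c₄) :
    ∃ c₁ c₂ : ℝ, 0 < c₁ ∧ 0 < c₂ ∧
      ∀ (n : ℕ) (_ : 0 < n) (Ω : Type) (_ : MeasurableSpace Ω) (μ : Measure Ω)
        (_ : IsProbabilityMeasure μ) (X : Ω → Fin n → ℝ) (_ : Measurable X)
        (L : ℝ), 1 ≤ L →
        (∀ (τ : Finset (Fin n)) (ε : ℝ), 0 < ε → ε < 1 →
          μ {ω | (Set.ncard {i : Fin n | i ∈ τ ∧ ε ≤ |X ω i|} : ℝ) ≤ (τ.card : ℝ) / 2} ≤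
            ENNReal.ofReal ((c₃ * L * ε) ^ (c₄ * (τ.card : ℝ)))) →
        ∀ (p : ℝ), 1 ≤ p → ∀ a : Fin n → ℝ, a ≠ 0 → ∀ ε : ℝ, 0 < ε → ε < 1 →
        μ {ω | (∑ i, |a i * X ω i| ^ p) ^ ((1 : ℝ) / p) ≤
            ε * (∑ i, |a i| ^ p) ^ ((1 : ℝ) / p)} ≤
          ENNReal.ofReal ((c₂ * ε * L) ^
            ((c₁ * (∑ i, |a i| ^ p) ^ ((1 : ℝ) / p) / ⨆ i, |a i|) ^ p)) := by
  classical
  have hc4' : (0:ℝ) < 1 + c₄ := by linarith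
  set β : ℝ := c₄ ^ 2 / (1 + c₄) with hβdef
  have hβ : 0 < β := by positivity
  clear_value β
  set D : ℝ := max (max 2 ((2:ℝ) ^ (1/β))) (1/c₃) with hDdef
  have hD2 : (2:ℝ) ≤ D := le_trans (le_max_left _ _) (le_max_left _ _)
  have hD1 : (1:ℝ) ≤ D := by linarith
  have hD0 : (0:ℝ) < D := by linarith
  have hDβ : (2:ℝ) ^ (1/β) ≤ D := le_trans (le_max_right _ _) (le_max_left _ _)
  have hDc₃ : 1/c₃ ≤ D := le_max_right _ _
  clear_value D
  set c₁ : ℝ := min 1 (c₄ / (4 * (1 + c₄))) with hc₁def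
  have hc₁pos : 0 < c₁ := lt_min one_pos (by positivity)
  have hc₁le1 : c₁ ≤ 1 := min_le_left _ _
  have hc₁le : c₁ ≤ c₄ / (4 * (1 + c₄)) := min_le_right _ _
  clear_value c₁
  refine ⟨c₁, 128 * c₃ * D, hc₁pos, by positivity, ?_⟩
  intro n hn Ω _ μ hμ X hX L hL hyp p hp a ha ε hε hε1
  set c₂ : ℝ := 128 * c₃ * D with hc₂def
  clear_value c₂
  have hc₂pos : 0 < c₂ := by rw [hc₂def]; positivity
  have hp0 : 0 < p := lt_of_lt_of_le one_pos hp
  have hpne : p ≠ 0 := ne_of_gt hp0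
  have hL0 : (0:ℝ) < L := lt_of_lt_of_le one_pos hL
  have hFinNonempty : Nonempty (Fin n) := ⟨⟨0, hn⟩⟩
  set M : ℝ := ⨆ i, |a i| with hMdef
  set S : ℝ := ∑ i, |a i| ^ p with hSdef
  have hbM : ∀ i, |a i| ≤ M := by
    intro i; rw [hMdef]
    exact le_ciSup (f := fun i => |a i|) (Set.Finite.bddAbove (Set.finite_range _)) i
  obtain ⟨i₀, hi₀⟩ : ∃ i, a i ≠ 0 := by
    by_contra h; push_neg at h; exact ha (funext h)
  have hM0 : 0 < M := lt_of_lt_of_le (abs_pos.2 hi₀) (hbM i₀)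
  clear_value M
  have hterm : ∀ i, 0 ≤ |a i| ^ p := fun i => Real.rpow_nonneg (abs_nonneg _) _
  have hS0 : 0 < S := by
    rw [hSdef]
    exact lt_of_lt_of_le (Real.rpow_pos_of_pos (abs_pos.2 hi₀) p)
      (Finset.single_le_sum (fun i _ => hterm i) (Finset.mem_univ i₀))
  clear_value S
  set k : ℝ := c₁ ^ p * (S / M ^ p) with hkdef
  clear_value k
  have hk0 : 0 < k := by
    rw [hkdef]
    exact mul_pos (Real.rpow_pos_of_pos hc₁pos p)
      (div_pos hS0 (Real.rpow_pos_of_pos hM0 p))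
  have hkeq : (c₁ * S ^ ((1:ℝ)/p) / M) ^ p = k := by
    rw [Real.div_rpow (mul_nonneg hc₁pos.le (Real.rpow_nonneg hS0.le _)) hM0.le,
        Real.mul_rpow hc₁pos.le (Real.rpow_nonneg hS0.le _),
        ← Real.rpow_mul hS0.le, one_div_mul_cancel hpne, Real.rpow_one, hkdef,
        mul_div_assoc]
  rw [hkeq]
  set s : ℝ := c₂ * ε * L with hsdef
  clear_value s
  have hs0 : 0 < s := by rw [hsdef]; positivity
  by_cases hs1 : 1 ≤ s
  · calc μ _ ≤ 1 := prob_le_one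
      _ ≤ ENNReal.ofReal (s ^ k) := by
          rw [← ENNReal.ofReal_one]
          refine ENNReal.ofReal_le_ofReal ?_
          calc (1:ℝ) = 1 ^ k := (Real.one_rpow k).symm
            _ ≤ s ^ k := Real.rpow_le_rpow (by norm_num) hs1 hk0.le
  push_neg at hs1
  -- ε' and basic bounds
  set ε' : ℝ := 128 * ε with hε'def
  clear_value ε'
  have hε'0 : 0 < ε' := by rw [hε'def]; positivity
  have hyv : c₃ * L * ε' = s / D := by
    rw [hε'def, hsdef, hc₂def]; field_simp
  have hyv0 : 0 < c₃ * L * ε' := by positivity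
  have hyvlt : c₃ * L * ε' < 1 / D := by
    rw [hyv]; gcongr
  have hyvD : c₃ * L * ε' ≤ 1 / D := hyvlt.le
  have hyv1 : c₃ * L * ε' ≤ 1 := le_trans hyvD (by rw [div_le_one hD0]; exact hD1)
  have h1Dc₃ : 1 / D ≤ c₃ := by
    rw [div_le_iff₀ hD0]
    rw [div_le_iff₀ hc₃] at hDc₃
    linarith only [hDc₃]
  have hε'1 : ε' < 1 := by
    have h2 : c₃ * L * ε' < c₃ * L * 1 := by
      have h3 : c₃ ≤ c₃ * L := by nlinarith [hc₃, hL]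
      calc c₃ * L * ε' < 1/D := hyvlt
        _ ≤ c₃ := h1Dc₃
        _ ≤ c₃ * L := h3
        _ = c₃ * L * 1 := (mul_one _).symm
    exact lt_of_mul_lt_mul_left h2 (by positivity)
  -- dyadic levels
  set q : ℝ := (1/2 : ℝ) with hqdef
  clear_value q
  have hq0 : (0:ℝ) < q := by rw [hqdef]; norm_num
  set r : ℝ := q ^ p with hrdef
  clear_value r
  have hr0 : 0 < r := by rw [hrdef]; exact Real.rpow_pos_of_pos hq0 p
  have hrhalf : r ≤ 1/2 := by
    calc r = q ^ p := hrdef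
      _ ≤ q ^ (1:ℝ) := Real.rpow_le_rpow_of_exponent_ge hq0 (by rw [hqdef]; norm_num) hp
      _ = 1/2 := by rw [Real.rpow_one, hqdef]
  have hqr : ∀ j : ℕ, ((q:ℝ) ^ j) ^ p = r ^ j := by
    intro j
    rw [hrdef, ← Real.rpow_natCast q j, ← Real.rpow_mul hq0.le, mul_comm,
        Real.rpow_mul hq0.le, Real.rpow_natCast]
  have hex : ∀ i : Fin n, a i ≠ 0 → ∃ j : ℕ, M * q ^ (j+1) < |a i| := by
    intro i hai
    have hane : |a i| ≠ 0 := abs_ne_zero.2 hai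
    obtain ⟨j, hj⟩ := exists_pow_lt_of_lt_one (x := |a i| / M) (y := q)
      (by positivity) (by rw [hqdef]; norm_num)
    refine ⟨j, ?_⟩
    have h1 : q ^ (j+1) ≤ q ^ j := by
      apply pow_le_pow_of_le_one hq0.le (by rw [hqdef]; norm_num)
      omega
    have h2 : M * q ^ j < |a i| := by
      rw [lt_div_iff₀ hM0] at hj
      calc M * q ^ j = q ^ j * M := mul_comm _ _
        _ < |a i| := hj
    calc M * q ^ (j+1) ≤ M * q ^ j := by
          exact mul_le_mul_of_nonneg_left h1 hM0.le
      _ < |a i| := h2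
  set lev : Fin n → ℕ := fun i => sInf {j : ℕ | M * q ^ (j+1) < |a i|} with hlevdef
  clear_value lev
  have hlev_lt : ∀ i, a i ≠ 0 → M * q ^ (lev i + 1) < |a i| := by
    intro i h
    have : lev i = sInf {j : ℕ | M * q ^ (j+1) < |a i|} := by rw [hlevdef]
    rw [this]
    exact Nat.sInf_mem (hex i h)
  have hlev_le : ∀ i, a i ≠ 0 → |a i| ≤ M * q ^ (lev i) := by
    intro i h
    rcases Nat.eq_zero_or_pos (lev i) with h0 | hposi
    · rw [h0, pow_zero, mul_one]; exact hbM i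
    · have hm : lev i - 1 < sInf {j : ℕ | M * q ^ (j+1) < |a i|} := by
        have h5 : lev i = sInf {j : ℕ | M * q ^ (j+1) < |a i|} := by rw [hlevdef]
        omega
      have hnot := Nat.notMem_of_lt_sInf hm
      have heq : lev i - 1 + 1 = lev i := by omega
      simp only [Set.mem_setOf_eq, heq] at hnot
      exact le_of_not_gt hnot
  -- support, blocks, levels present
  set supp : Finset (Fin n) := Finset.univ.filter (fun i => a i ≠ 0) with hsuppdef
  clear_value supp
  set I : ℕ → Finset (Fin n) := fun j => supp.filter (fun i => lev i = j) with hIdef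
  clear_value I
  set T : Finset ℕ := supp.image lev with hTdef
  clear_value T
  have hmemI : ∀ j, ∀ i ∈ I j, a i ≠ 0 ∧ lev i = j := by
    intro j i hi
    rw [hIdef] at hi
    simp only [Finset.mem_filter, hsuppdef, Finset.mem_univ, true_and] at hi
    exact hi
  have hblock_hi : ∀ j, ∀ i ∈ I j, |a i| ^ p ≤ M ^ p * r ^ j := by
    intro j i hi
    obtain ⟨hai, hlevi⟩ := hmemI j i hi
    calc |a i| ^ p ≤ (M * q ^ j) ^ p :=
          Real.rpow_le_rpow (abs_nonneg _) (hlevi ▸ hlev_le i hai) hp0.le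
      _ = M ^ p * r ^ j := by
          rw [Real.mul_rpow hM0.le (pow_nonneg hq0.le j), hqr j]
  have hblock_lo : ∀ j, ∀ i ∈ I j, M ^ p * r ^ j * r ≤ |a i| ^ p := by
    intro j i hi
    obtain ⟨hai, hlevi⟩ := hmemI j i hi
    have h1 : (M * q ^ (j+1)) ^ p ≤ |a i| ^ p :=
      Real.rpow_le_rpow (by positivity) (le_of_lt (hlevi ▸ hlev_lt i hai)) hp0.le
    calc M ^ p * r ^ j * r = (M * q ^ (j+1)) ^ p := by
          rw [Real.mul_rpow hM0.le (pow_nonneg hq0.le _), hqr (j+1), pow_succ, mul_assoc]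
      _ ≤ |a i| ^ p := h1
  have hSsupp : S = ∑ i ∈ supp, |a i| ^ p := by
    rw [hSdef, hsuppdef]
    refine (Finset.sum_subset (Finset.filter_subset _ _) ?_).symm
    intro i _ hi
    have hz : a i = 0 := by simpa using hi
    rw [hz, abs_zero, Real.zero_rpow hpne]
  have hpart : ∑ j ∈ T, ∑ i ∈ I j, |a i| ^ p = ∑ i ∈ supp, |a i| ^ p := by
    rw [hTdef, hIdef]
    exact Finset.sum_fiberwise_of_maps_to (fun i hi => Finset.mem_image_of_mem lev hi) _
  have hblocksum_le : ∀ j, ∑ i ∈ I j, |a i| ^ p ≤ ((I j).card : ℝ) * (M ^ p * r ^ j) := by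
    intro j
    calc ∑ i ∈ I j, |a i| ^ p ≤ ∑ _i ∈ I j, M ^ p * r ^ j :=
          Finset.sum_le_sum (hblock_hi j)
      _ = ((I j).card : ℝ) * (M ^ p * r ^ j) := by
          rw [Finset.sum_const, nsmul_eq_mul]
  -- heavy levels
  set K : ℝ := (1 + c₄)/c₄ * k with hKdef
  clear_value K
  have hK0 : 0 < K := by rw [hKdef]; positivity
  set H : Finset ℕ := T.filter (fun j => K ≤ ((I j).card : ℝ)) with hHdef
  clear_value H
  have hc₁p : c₁ ^ p ≤ c₄ / (4 * (1 + c₄)) := by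
    calc c₁ ^ p ≤ c₁ ^ (1:ℝ) := Real.rpow_le_rpow_of_exponent_ge hc₁pos hc₁le1 hp
      _ = c₁ := Real.rpow_one c₁
      _ ≤ _ := hc₁le
  have hlight : ∑ j ∈ T.filter (fun j => ¬ K ≤ ((I j).card : ℝ)), ∑ i ∈ I j, |a i| ^ p ≤ S / 2 := by
    have hKM : K * M ^ p * 2 ≤ S / 2 := by
      have hMp : 0 < M ^ p := Real.rpow_pos_of_pos hM0 p
      have h5 : c₁ ^ p * (4 * (1 + c₄)) ≤ c₄ :=
        (le_div_iff₀ (by positivity)).1 hc₁p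
      have h7 : (c₁ ^ p * (4 * (1 + c₄))) * S ≤ c₄ * S :=
        mul_le_mul_of_nonneg_right h5 hS0.le
      have h2 : K * M ^ p * 2 = 2 * (1 + c₄) * (c₁ ^ p) * S / c₄ := by
        rw [hKdef, hkdef]; field_simp
      rw [h2, div_le_iff₀ hc₄]
      linarith only [h7]
    calc ∑ j ∈ T.filter (fun j => ¬ K ≤ ((I j).card : ℝ)), ∑ i ∈ I j, |a i| ^ p
        ≤ ∑ j ∈ T.filter (fun j => ¬ K ≤ ((I j).card : ℝ)), K * (M ^ p * r ^ j) := by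
          refine Finset.sum_le_sum ?_
          intro j hj
          have hcard : ((I j).card : ℝ) ≤ K := by
            have := (Finset.mem_filter.1 hj).2
            push_neg at this
            exact this.le
          calc ∑ i ∈ I j, |a i| ^ p ≤ ((I j).card : ℝ) * (M ^ p * r ^ j) := hblocksum_le j
            _ ≤ K * (M ^ p * r ^ j) := by
                refine mul_le_mul_of_nonneg_right hcard ?_
                positivity
      _ = K * M ^ p * ∑ j ∈ T.filter (fun j => ¬ K ≤ ((I j).card : ℝ)), r ^ j := by
          rw [Finset.mul_sum]
          refine Finset.sum_congr rfl ?_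
          intro j _; ring
      _ ≤ K * M ^ p * 2 := by
          refine mul_le_mul_of_nonneg_left (finset_geom_le' hr0.le hrhalf _) ?_
          have hMp : 0 < M ^ p := Real.rpow_pos_of_pos hM0 p
          positivity
      _ ≤ S / 2 := hKM
  have hheavy : S / 2 ≤ ∑ j ∈ H, ∑ i ∈ I j, |a i| ^ p := by
    have hsplit := Finset.sum_filter_add_sum_filter_not T (fun j => K ≤ ((I j).card : ℝ))
      (fun j => ∑ i ∈ I j, |a i| ^ p)
    have hTS : ∑ j ∈ T, ∑ i ∈ I j, |a i| ^ p = S := by rw [hpart, ← hSsupp]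
    rw [hHdef]
    linarith only [hlight, hsplit, hTS]
  -- groups of blocks with equal cardinality
  set Nn : Finset ℕ := H.image (fun j => (I j).card) with hNndef
  clear_value Nn
  set fib : ℕ → Finset ℕ := fun N => H.filter (fun j => (I j).card = N) with hfibdef
  clear_value fib
  have hfib_ne : ∀ N ∈ Nn, (fib N).Nonempty := by
    intro N hN
    rw [hNndef] at hN
    obtain ⟨j, hj, hjN⟩ := Finset.mem_image.1 hN
    exact ⟨j, by rw [hfibdef]; exact Finset.mem_filter.2 ⟨hj, hjN⟩⟩
  have hfibH : ∀ N, ∀ j ∈ fib N, j ∈ H ∧ (I j).card = N := by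
    intro N j hj
    rw [hfibdef] at hj
    exact Finset.mem_filter.1 hj
  set jm : ℕ → ℕ := fun N => if h : (fib N).Nonempty then (fib N).min' h else 0 with hjmdef
  clear_value jm
  have hjm_mem : ∀ N ∈ Nn, jm N ∈ fib N := by
    intro N hN
    have h := hfib_ne N hN
    have he : jm N = (fib N).min' h := by rw [hjmdef]; exact dif_pos h
    rw [he]; exact (fib N).min'_mem h
  have hjm_card : ∀ N ∈ Nn, (I (jm N)).card = N := fun N hN => (hfibH N _ (hjm_mem N hN)).2
  have hjm_H : ∀ N ∈ Nn, jm N ∈ H := fun N hN => (hfibH N _ (hjm_mem N hN)).1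
  have hNK : ∀ N ∈ Nn, K ≤ (N:ℝ) := by
    intro N hN
    have h1 := hjm_H N hN
    rw [hHdef] at h1
    have h2 := (Finset.mem_filter.1 h1).2
    rwa [hjm_card N hN] at h2
  have hN1 : ∀ N ∈ Nn, 1 ≤ N := by
    intro N hN
    rcases Nat.eq_zero_or_pos N with h0 | h1
    · exfalso
      have h2 := hNK N hN
      rw [h0] at h2
      simp only [Nat.cast_zero] at h2
      linarith only [hK0, h2]
    · exact h1
  have hgroup : ∀ N ∈ Nn, ∑ j ∈ fib N, ∑ i ∈ I j, |a i| ^ p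
      ≤ ((N:ℝ) * M ^ p) * (2 * r ^ (jm N)) := by
    intro N hN
    have hne := hfib_ne N hN
    have hmin : jm N = (fib N).min' hne := by rw [hjmdef]; exact dif_pos hne
    have hNM0 : (0:ℝ) ≤ (N:ℝ) * M ^ p :=
      mul_nonneg (Nat.cast_nonneg N) (Real.rpow_pos_of_pos hM0 p).le
    calc ∑ j ∈ fib N, ∑ i ∈ I j, |a i| ^ p
        ≤ ∑ j ∈ fib N, ((N:ℝ) * M ^ p) * r ^ j := by
          refine Finset.sum_le_sum ?_
          intro j hj
          have hcard := (hfibH N j hj).2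
          calc ∑ i ∈ I j, |a i| ^ p ≤ ((I j).card : ℝ) * (M ^ p * r ^ j) := hblocksum_le j
            _ = ((N:ℝ) * M ^ p) * r ^ j := by rw [hcard]; ring
      _ = ((N:ℝ) * M ^ p) * ∑ j ∈ fib N, r ^ j := by rw [Finset.mul_sum]
      _ ≤ ((N:ℝ) * M ^ p) * (2 * r ^ (jm N)) := by
          refine mul_le_mul_of_nonneg_left ?_ hNM0
          rw [hmin]
          exact finset_geom_min_le' hr0.le hrhalf _ hne
  have hW : S / 2 ≤ ∑ N ∈ Nn, ((N:ℝ) * M ^ p) * (2 * r ^ (jm N)) := by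
    have hfw : ∑ N ∈ Nn, ∑ j ∈ fib N, ∑ i ∈ I j, |a i| ^ p
        = ∑ j ∈ H, ∑ i ∈ I j, |a i| ^ p := by
      rw [hNndef, hfibdef]
      exact Finset.sum_fiberwise_of_maps_to (fun j hj => Finset.mem_image_of_mem _ hj) _
    calc S / 2 ≤ ∑ j ∈ H, ∑ i ∈ I j, |a i| ^ p := hheavy
      _ = ∑ N ∈ Nn, ∑ j ∈ fib N, ∑ i ∈ I j, |a i| ^ p := hfw.symm
      _ ≤ ∑ N ∈ Nn, ((N:ℝ) * M ^ p) * (2 * r ^ (jm N)) := Finset.sum_le_sum hgroup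
  -- event inclusion
  have hincl : {ω : Ω | (∑ i, |a i * X ω i| ^ p) ^ ((1 : ℝ) / p) ≤ ε * S ^ ((1 : ℝ) / p)}
      ⊆ ⋃ N ∈ Nn, {ω : Ω | (Set.ncard {i : Fin n | i ∈ I (jm N) ∧ ε' ≤ |X ω i|} : ℝ)
          ≤ ((I (jm N)).card : ℝ) / 2} := by
    intro ω hω
    rw [Set.mem_setOf_eq] at hω
    by_contra hcon
    rw [Set.mem_iUnion₂] at hcon
    push_neg at hcon
    have hcnt : ∀ N ∈ Nn, ((I (jm N)).card : ℝ) / 2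
        < (((I (jm N)).filter (fun i => ε' ≤ |X ω i|)).card : ℝ) := by
      intro N hN
      have h1 := hcon N hN
      rw [Set.mem_setOf_eq] at h1
      have h2 : {i : Fin n | i ∈ I (jm N) ∧ ε' ≤ |X ω i|}
          = (((I (jm N)).filter (fun i => ε' ≤ |X ω i|) : Finset (Fin n)) : Set (Fin n)) := by
        ext i
        simp [Finset.mem_filter]
      rw [h2, Set.ncard_coe_finset] at h1
      exact lt_of_not_ge h1
    have hA0 : ∀ i, (0:ℝ) ≤ |a i * X ω i| ^ p := fun i => Real.rpow_nonneg (abs_nonneg _) _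
    have habs : ∀ i, |a i * X ω i| ^ p = |a i| ^ p * |X ω i| ^ p := by
      intro i; rw [abs_mul, Real.mul_rpow (abs_nonneg _) (abs_nonneg _)]
    have hEbound : ∑ i, |a i * X ω i| ^ p ≤ ε ^ p * S := by
      have h3 : (0:ℝ) ≤ ∑ i, |a i * X ω i| ^ p := Finset.sum_nonneg (fun i _ => hA0 i)
      have h4 := Real.rpow_le_rpow (Real.rpow_nonneg h3 _) hω hp0.le
      rw [← Real.rpow_mul h3, one_div_mul_cancel hpne, Real.rpow_one] at h4
      rw [Real.mul_rpow hε.le (Real.rpow_nonneg hS0.le _)] at h4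
      rw [← Real.rpow_mul hS0.le, one_div_mul_cancel hpne, Real.rpow_one] at h4
      exact h4
    have hlow : ∀ N ∈ Nn, ((N:ℝ)/2) * ((M ^ p * r ^ (jm N) * r) * ε' ^ p)
        ≤ ∑ i ∈ (I (jm N)).filter (fun i => ε' ≤ |X ω i|), |a i| ^ p * |X ω i| ^ p := by
      intro N hN
      have hFsub : ∀ i ∈ (I (jm N)).filter (fun i => ε' ≤ |X ω i|),
          i ∈ I (jm N) ∧ ε' ≤ |X ω i| := by
        intro i hi; exact Finset.mem_filter.1 hi
      have hterm1 : ∀ i ∈ (I (jm N)).filter (fun i => ε' ≤ |X ω i|),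
          (M ^ p * r ^ (jm N) * r) * ε' ^ p ≤ |a i| ^ p * |X ω i| ^ p := by
        intro i hi
        obtain ⟨hiI, hix⟩ := hFsub i hi
        refine mul_le_mul (hblock_lo _ i hiI) ?_ ?_ ?_
        · exact Real.rpow_le_rpow hε'0.le hix hp0.le
        · exact Real.rpow_nonneg hε'0.le p
        · exact Real.rpow_nonneg (abs_nonneg _) p
      have hcard := hcnt N hN
      rw [hjm_card N hN] at hcard
      have hcnonneg : (0:ℝ) ≤ (M ^ p * r ^ (jm N) * r) * ε' ^ p := by
        have h8 : (0:ℝ) < M ^ p := Real.rpow_pos_of_pos hM0 p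
        have h9 : (0:ℝ) < ε' ^ p := Real.rpow_pos_of_pos hε'0 p
        positivity
      calc ((N:ℝ)/2) * ((M ^ p * r ^ (jm N) * r) * ε' ^ p)
          ≤ ((((I (jm N)).filter (fun i => ε' ≤ |X ω i|)).card : ℝ))
              * ((M ^ p * r ^ (jm N) * r) * ε' ^ p) := by
            refine mul_le_mul_of_nonneg_right ?_ hcnonneg
            linarith only [hcard]
        _ ≤ ∑ i ∈ (I (jm N)).filter (fun i => ε' ≤ |X ω i|), |a i| ^ p * |X ω i| ^ p := by
            have h10 := Finset.card_nsmul_le_sum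
              ((I (jm N)).filter (fun i => ε' ≤ |X ω i|)) _ _ hterm1
            rwa [nsmul_eq_mul] at h10
    have hdisj : ((Nn : Finset ℕ) : Set ℕ).PairwiseDisjoint
        (fun N => (I (jm N)).filter (fun i => ε' ≤ |X ω i|)) := by
      intro N hN N' hN' hne'
      refine Finset.disjoint_left.2 ?_
      intro i hi hi'
      have h1 := (Finset.mem_filter.1 hi).1
      have h2 := (Finset.mem_filter.1 hi').1
      have h3 := (hmemI _ i h1).2
      have h4 := (hmemI _ i h2).2
      apply hne'
      rw [← hjm_card N (Finset.mem_coe.1 hN), ← hjm_card N' (Finset.mem_coe.1 hN'),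
        ← h3, ← h4]
    have htot : ∑ N ∈ Nn, ∑ i ∈ (I (jm N)).filter (fun i => ε' ≤ |X ω i|),
        |a i| ^ p * |X ω i| ^ p ≤ ∑ i, |a i| ^ p * |X ω i| ^ p := by
      rw [← Finset.sum_biUnion hdisj]
      refine Finset.sum_le_sum_of_subset_of_nonneg (Finset.subset_univ _) ?_
      intro i _ _
      exact mul_nonneg (Real.rpow_nonneg (abs_nonneg _) _) (Real.rpow_nonneg (abs_nonneg _) _)
    have hsum_eq : ∑ i, |a i * X ω i| ^ p = ∑ i, |a i| ^ p * |X ω i| ^ p :=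
      Finset.sum_congr rfl (fun i _ => habs i)
    have hfinal0 : (r * ε' ^ p / 4) * (S / 2) ≤ ε ^ p * S := by
      calc (r * ε' ^ p / 4) * (S / 2)
          ≤ (r * ε' ^ p / 4) * ∑ N ∈ Nn, ((N:ℝ) * M ^ p) * (2 * r ^ (jm N)) := by
            refine mul_le_mul_of_nonneg_left hW ?_
            have h9 : (0:ℝ) < ε' ^ p := Real.rpow_pos_of_pos hε'0 p
            positivity
        _ = ∑ N ∈ Nn, ((N:ℝ)/2) * ((M ^ p * r ^ (jm N) * r) * ε' ^ p) := by
            rw [Finset.mul_sum]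
            exact Finset.sum_congr rfl (fun N _ => by ring)
        _ ≤ ∑ N ∈ Nn, ∑ i ∈ (I (jm N)).filter (fun i => ε' ≤ |X ω i|),
              |a i| ^ p * |X ω i| ^ p := Finset.sum_le_sum hlow
        _ ≤ ∑ i, |a i| ^ p * |X ω i| ^ p := htot
        _ = ∑ i, |a i * X ω i| ^ p := hsum_eq.symm
        _ ≤ ε ^ p * S := hEbound
    have h3 : r * ε' ^ p = (64:ℝ) ^ p * ε ^ p := by
      rw [hrdef, hε'def, ← Real.mul_rpow hq0.le (by positivity : (0:ℝ) ≤ 128 * ε), hqdef]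
      have h11 : (1/2:ℝ) * (128 * ε) = 64 * ε := by ring
      rw [h11, Real.mul_rpow (by norm_num : (0:ℝ) ≤ 64) hε.le]
    have h64 : (64:ℝ) ≤ (64:ℝ) ^ p := by
      calc (64:ℝ) = 64 ^ (1:ℝ) := (Real.rpow_one _).symm
        _ ≤ 64 ^ p := Real.rpow_le_rpow_of_exponent_le (by norm_num) hp
    have hεpS : 0 < ε ^ p * S := mul_pos (Real.rpow_pos_of_pos hε p) hS0
    rw [h3] at hfinal0
    have h65 : (64:ℝ) * (ε ^ p * S) ≤ (64:ℝ) ^ p * (ε ^ p * S) :=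
      mul_le_mul_of_nonneg_right h64 hεpS.le
    linarith only [hfinal0, h65, hεpS]
  -- final measure computation
  refine le_trans (measure_mono hincl) ?_
  refine le_trans (measure_biUnion_finset_le Nn _) ?_
  have hstep : ∀ N ∈ Nn, μ {ω : Ω | (Set.ncard {i : Fin n | i ∈ I (jm N) ∧ ε' ≤ |X ω i|} : ℝ)
      ≤ ((I (jm N)).card : ℝ) / 2} ≤ ENNReal.ofReal ((c₃ * L * ε') ^ (c₄ * (N:ℝ))) := by
    intro N hN
    refine le_trans (hyp (I (jm N)) ε' hε'0 hε'1) (le_of_eq ?_)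
    rw [hjm_card N hN]
  refine le_trans (Finset.sum_le_sum hstep) ?_
  rw [← ENNReal.ofReal_sum_of_nonneg (fun N _ => Real.rpow_nonneg hyv0.le _)]
  refine ENNReal.ofReal_le_ofReal ?_
  -- the real-number series bound
  have hzβ : (c₃ * L * ε') ^ β ≤ 1/2 := by
    have hstep1 : (c₃ * L * ε') ^ β ≤ ((1:ℝ)/(2:ℝ) ^ ((1:ℝ)/β)) ^ β := by
      refine Real.rpow_le_rpow hyv0.le ?_ hβ.le
      refine le_trans hyvD ?_
      exact one_div_le_one_div_of_le (Real.rpow_pos_of_pos (by norm_num) _) hDβ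
    refine le_trans hstep1 (le_of_eq ?_)
    rw [one_div ((2:ℝ) ^ ((1:ℝ)/β)), ← Real.rpow_neg (by norm_num : (0:ℝ) ≤ 2),
      ← Real.rpow_mul (by norm_num : (0:ℝ) ≤ 2), neg_mul, one_div,
      inv_mul_cancel₀ hβ.ne']
    rw [Real.rpow_neg (by norm_num : (0:ℝ) ≤ 2), Real.rpow_one]
    norm_num
  have hterm2 : ∀ N ∈ Nn, (c₃ * L * ε') ^ (c₄ * (N:ℝ))
      ≤ (c₃ * L * ε') ^ k * ((c₃ * L * ε') ^ β) ^ N := by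
    intro N hN
    have hKN := hNK N hN
    have h1 : k + β * (N:ℝ) ≤ c₄ * (N:ℝ) := by
      rw [hKdef] at hKN
      rw [hβdef]
      have h2 : (1 + c₄) * k ≤ c₄ * (N:ℝ) := by
        rw [div_mul_eq_mul_div, div_le_iff₀ hc₄] at hKN
        linarith only [hKN]
      have h5 : c₄ * (N:ℝ) - c₄^2/(1+c₄) * (N:ℝ) = c₄*(N:ℝ)/(1+c₄) := by
        field_simp
        ring
      have h6 : k ≤ c₄*(N:ℝ)/(1+c₄) := by
        rw [le_div_iff₀ hc4']
        linarith only [h2]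
      linarith only [h5, h6]
    calc (c₃ * L * ε') ^ (c₄*(N:ℝ)) ≤ (c₃ * L * ε') ^ (k + β*(N:ℝ)) :=
          Real.rpow_le_rpow_of_exponent_ge hyv0 hyv1 h1
      _ = (c₃ * L * ε') ^ k * ((c₃ * L * ε') ^ β) ^ N := by
          rw [Real.rpow_add hyv0, Real.rpow_mul hyv0.le, Real.rpow_natCast]
  rcases Finset.eq_empty_or_nonempty Nn with hemp | hne
  · rw [hemp, Finset.sum_empty]
    exact (Real.rpow_pos_of_pos hs0 k).le
  · have hz0 : 0 ≤ (c₃ * L * ε') ^ β := Real.rpow_nonneg hyv0.le β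
    have hmin1 : 1 ≤ Nn.min' hne := hN1 _ (Nn.min'_mem hne)
    calc ∑ N ∈ Nn, (c₃ * L * ε') ^ (c₄ * (N:ℝ))
        ≤ ∑ N ∈ Nn, (c₃ * L * ε') ^ k * ((c₃ * L * ε') ^ β) ^ N := Finset.sum_le_sum hterm2
      _ = (c₃ * L * ε') ^ k * ∑ N ∈ Nn, ((c₃ * L * ε') ^ β) ^ N := by rw [Finset.mul_sum]
      _ ≤ (c₃ * L * ε') ^ k * (2 * ((c₃ * L * ε') ^ β) ^ (Nn.min' hne)) := by
          refine mul_le_mul_of_nonneg_left (finset_geom_min_le' hz0 hzβ Nn hne) ?_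
          exact Real.rpow_nonneg hyv0.le k
      _ ≤ (c₃ * L * ε') ^ k * 1 := by
          refine mul_le_mul_of_nonneg_left ?_ (Real.rpow_nonneg hyv0.le k)
          have h7 : ((c₃ * L * ε') ^ β) ^ (Nn.min' hne) ≤ ((c₃ * L * ε') ^ β) ^ 1 :=
            pow_le_pow_of_le_one hz0 (le_trans hzβ (by norm_num)) hmin1
          rw [pow_one] at h7
          linarith only [hzβ, h7]
      _ = (c₃ * L * ε') ^ k := mul_one _
      _ = (s/D) ^ k := by rw [hyv]
      _ = s ^ k / D ^ k := Real.div_rpow hs0.le hD0.le k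
      _ ≤ s ^ k := by
          refine div_le_self (Real.rpow_nonneg hs0.le k) ?_
          calc (1:ℝ) = 1 ^ k := (Real.one_rpow k).symm
            _ ≤ D ^ k := Real.rpow_le_rpow (by norm_num) hD1 hk0.le
end
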